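/- Let A, B be linear operators on a finite-dimensional complex Hilbert space with ‖A‖₁ ≤ 1 and ‖B‖₁ ≤ 1. If ‖αA − (1−α)B‖₁ = 1 for some α ∈ (0,1), then ‖λA − (1−λ)B‖₁ = 1 for all λ ∈ (0,1). -/

import Mathlib

open Matrix Kronecker BigOperators ComplexOrder

noncomputable section

/-- Square root of a positive semidefinite matrix (as in the older Mathlib). -/
noncomputable def Matrix.PosSemidef.sqrt {n 𝕜 : Type*} [Fintype n] [DecidableEq n] [RCLike 𝕜]
    {A : Matrix n n 𝕜} (hA : A.PosSemidef) : Matrix n n 𝕜 :=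
  (hA.1.eigenvectorUnitary : Matrix n n 𝕜) * diagonal ((↑) ∘ (√·) ∘ hA.1.eigenvalues) *
    (star hA.1.eigenvectorUnitary : Matrix n n 𝕜)

/-- Trace norm (sum of singular values) of a complex matrix. -/
noncomputable def traceNorm {l m : Type*} [Fintype l] [Fintype m] [DecidableEq m]
    (A : Matrix l m ℂ) : ℝ :=
  ((Matrix.posSemidef_conjTranspose_mul_self A).sqrt.trace).re

/-- Frobenius norm. -/
noncomputable def frobNorm {l m : Type*} [Fintype l] [Fintype m]
    (A : Matrix l m ℂ) : ℝ :=
  Real.sqrt ((Aᴴ * A).trace.re)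

/-- Partial transpose on the first tensor factor. -/
def ptranspose {a b : Type*} (X : Matrix (a × b) (a × b) ℂ) : Matrix (a × b) (a × b) ℂ :=
  Matrix.of fun p q => X (q.1, p.2) (p.1, q.2)

/-- Outer product `u v*`. -/
def outer {a : Type*} (u v : a → ℂ) : Matrix a a ℂ :=
  Matrix.of fun p q => u p * star (v q)

/-- Density operator: positive semidefinite with trace one. -/
def IsDensity {a : Type*} [Fintype a] (ρ : Matrix a a ℂ) : Prop :=
  ρ.PosSemidef ∧ ρ.trace = 1

/-- Maximally entangled unit vector in `ℂⁿ ⊗ ℂᵐ`. -/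
def MaxEntangled (n m : ℕ) (u : Fin n × Fin m → ℂ) : Prop :=
  ∃ (x : Fin (min n m) → EuclideanSpace ℂ (Fin n))
    (y : Fin (min n m) → EuclideanSpace ℂ (Fin m)),
    Orthonormal ℂ x ∧ Orthonormal ℂ y ∧
      ∀ p : Fin n × Fin m,
        u p = (1 / Real.sqrt (min n m) : ℝ) * ∑ i, x i p.1 * y i p.2

/-- Extension `Φ ⊗ I` of a matrix map to a system with ancilla `c`. -/
def tensorExt {a b c : Type*} [Fintype a] [DecidableEq a] [Fintype c]
    (Φ : Matrix a a ℂ →ₗ[ℂ] Matrix b b ℂ)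
    (X : Matrix (a × c) (a × c) ℂ) : Matrix (b × c) (b × c) ℂ :=
  Matrix.of fun p q => Φ (Matrix.of fun i j => X (i, p.2) (j, q.2)) p.1 q.1

/-- Quantum channel: completely positive and trace preserving. -/
def IsChannel {a b : Type*} [Fintype a] [DecidableEq a] [Fintype b]
    (Φ : Matrix a a ℂ →ₗ[ℂ] Matrix b b ℂ) : Prop :=
  (∀ X, (Φ X).trace = X.trace) ∧
    ∀ (k : ℕ) (X : Matrix (a × Fin k) (a × Fin k) ℂ),
      X.PosSemidef → (tensorExt Φ X).PosSemidef

/-- Partial trace over the second tensor factor. -/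
def ptraceRight {a b : Type*} [Fintype b] (M : Matrix (a × b) (a × b) ℂ) :
    Matrix a a ℂ :=
  Matrix.of fun i k => ∑ c, M (i, c) (k, c)

/-- Partial trace over the first tensor factor. -/
def ptraceLeft {a b : Type*} [Fintype a] (M : Matrix (a × b) (a × b) ℂ) :
    Matrix b b ℂ :=
  Matrix.of fun i k => ∑ c, M (c, i) (c, k)

/-- Canonical maximally entangled state `τ = (1/d) vec(I)vec(I)*` on `a ⊗ a`. -/
noncomputable def tauGen {a : Type*} [Fintype a] [DecidableEq a] :
    Matrix (a × a) (a × a) ℂ :=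
  Matrix.of fun p q =>
    (Fintype.card a : ℂ)⁻¹ * (if p.1 = p.2 then 1 else 0) * (if q.1 = q.2 then 1 else 0)

/-- The operator `τ ⊗ σ` on `a ⊗ (a ⊗ r)`. -/
noncomputable def tauSigma {a r : Type*} [Fintype a] [DecidableEq a]
    (σ : Matrix r r ℂ) : Matrix (a × (a × r)) (a × (a × r)) ℂ :=
  Matrix.of fun p q => tauGen (p.1, p.2.1) (q.1, q.2.1) * σ p.2.2 q.2.2

/-- Fidelity of two positive semidefinite matrices. -/
noncomputable def fidelity {a : Type*} [Fintype a] [DecidableEq a]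
    {P Q : Matrix a a ℂ} (hP : P.PosSemidef) (hQ : Q.PosSemidef) : ℝ :=
  traceNorm (hP.sqrt * hQ.sqrt)

namespace TN13

open Matrix

variable {n : Type*} [Fintype n] [DecidableEq n]

lemma dot_aux (N : Matrix n n ℂ) (u w : n → ℂ) :
    star (N *ᵥ u) ⬝ᵥ w = star u ⬝ᵥ (Nᴴ *ᵥ w) := by
  rw [Matrix.star_mulVec, ← Matrix.dotProduct_mulVec]

lemma traceNorm_eq_sum (X : Matrix n n ℂ) :
    traceNorm X =
      ∑ i, Real.sqrt ((Matrix.posSemidef_conjTranspose_mul_self X).1.eigenvalues i) := by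
  set hH := Matrix.posSemidef_conjTranspose_mul_self X
  rw [traceNorm, Matrix.PosSemidef.sqrt, Matrix.trace_mul_cycle,
    show (star hH.1.eigenvectorUnitary.1 : Matrix n n ℂ) * hH.1.eigenvectorUnitary.1 = 1 from
      Matrix.mem_unitaryGroup_iff'.mp hH.1.eigenvectorUnitary.2, one_mul,
    Matrix.trace_diagonal]
  rw [Complex.re_sum]
  rfl

lemma norm_one_basis (X : Matrix n n ℂ) (i : n) :
    star (⇑((Matrix.posSemidef_conjTranspose_mul_self X).1.eigenvectorBasis i)) ⬝ᵥ
      (⇑((Matrix.posSemidef_conjTranspose_mul_self X).1.eigenvectorBasis i)) = 1 := by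
  set hH := Matrix.posSemidef_conjTranspose_mul_self X
  have h := @inner_self_eq_norm_sq_to_K ℂ _ _ _ _ (hH.1.eigenvectorBasis i)
  rw [EuclideanSpace.inner_eq_star_dotProduct] at h
  have hn : ‖hH.1.eigenvectorBasis i‖ = 1 := hH.1.eigenvectorBasis.orthonormal.1 i
  rw [hn] at h
  rw [dotProduct_comm, h]
  norm_num

lemma abs_trace_mul_le (M X : Matrix n n ℂ) (hM : (1 - M * Mᴴ).PosSemidef) :
    ‖(M * X).trace‖ ≤ traceNorm X := by
  classical
  set hH := Matrix.posSemidef_conjTranspose_mul_self X with hHdef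
  set U : Matrix n n ℂ := hH.1.eigenvectorUnitary.1 with hUdef
  have hUU : U * star U = 1 := Matrix.mem_unitaryGroup_iff.mp hH.1.eigenvectorUnitary.2
  have hcol : ∀ i, (fun k => U k i) = ⇑(hH.1.eigenvectorBasis i) := by
    intro i; funext k; exact hH.1.eigenvectorUnitary_apply k i
  have htr : (M * X).trace
      = ∑ i, star (⇑(hH.1.eigenvectorBasis i)) ⬝ᵥ ((M * X) *ᵥ ⇑(hH.1.eigenvectorBasis i)) := by
    have e1 : (star U * ((M * X) * U)).trace = (M * X).trace := by
      rw [Matrix.trace_mul_comm, mul_assoc, hUU, mul_one]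
    rw [← e1]
    rw [Matrix.trace]
    refine Finset.sum_congr rfl fun i _ => ?_
    rw [← hcol i]
    simp [Matrix.diag, Matrix.mul_apply, Matrix.mulVec, dotProduct]
  rw [htr]
  refine le_trans (norm_sum_le _ _) ?_
  rw [traceNorm_eq_sum X]
  refine Finset.sum_le_sum fun i _ => ?_
  set w : n → ℂ := ⇑(hH.1.eigenvectorBasis i) with hwdef
  have hw1 : star w ⬝ᵥ w = 1 := norm_one_basis X i
  -- rewrite the term as an inner product
  have hterm : star w ⬝ᵥ ((M * X) *ᵥ w) = star (Mᴴ *ᵥ w) ⬝ᵥ (X *ᵥ w) := by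
    rw [dot_aux Mᴴ w, Matrix.conjTranspose_conjTranspose, Matrix.mulVec_mulVec]
  set a : EuclideanSpace ℂ n := (WithLp.equiv 2 (n → ℂ)).symm (Mᴴ *ᵥ w) with hadef
  set b : EuclideanSpace ℂ n := (WithLp.equiv 2 (n → ℂ)).symm (X *ᵥ w) with hbdef
  have hinner : (inner ℂ a b : ℂ) = star (Mᴴ *ᵥ w) ⬝ᵥ (X *ᵥ w) := by
    rw [EuclideanSpace.inner_eq_star_dotProduct, dotProduct_comm]
    congr 1
  have ha2 : ‖a‖ ^ 2 ≤ 1 := by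
    have h1 : (inner ℂ a a : ℂ) = star (Mᴴ *ᵥ w) ⬝ᵥ (Mᴴ *ᵥ w) := by
      rw [EuclideanSpace.inner_eq_star_dotProduct, dotProduct_comm]; congr 1
    have h2 : star (Mᴴ *ᵥ w) ⬝ᵥ (Mᴴ *ᵥ w) = star w ⬝ᵥ ((M * Mᴴ) *ᵥ w) := by
      rw [dot_aux Mᴴ w, Matrix.mulVec_mulVec, Matrix.conjTranspose_conjTranspose]
    have h3 := hM.dotProduct_mulVec_nonneg w
    rw [Matrix.sub_mulVec, dotProduct_sub, Matrix.one_mulVec, hw1] at h3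
    have h4 : (star w ⬝ᵥ ((M * Mᴴ) *ᵥ w)).re ≤ 1 := by
      have := (Complex.le_def.mp h3).1
      simp only [Complex.zero_re, Complex.sub_re, Complex.one_re] at this
      linarith
    have h5 : ‖a‖ ^ 2 = (star w ⬝ᵥ ((M * Mᴴ) *ᵥ w)).re := by
      rw [← h2, ← h1, ← Complex.ofReal_re (‖a‖ ^ 2)]
      congr 1
      rw [inner_self_eq_norm_sq_to_K]
      push_cast
      rfl
    rw [h5]; exact h4
  have ha : ‖a‖ ≤ 1 := by nlinarith [norm_nonneg a]
  have hb2 : ‖b‖ ^ 2 = hH.1.eigenvalues i := by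
    have h1 : (inner ℂ b b : ℂ) = star (X *ᵥ w) ⬝ᵥ (X *ᵥ w) := by
      rw [EuclideanSpace.inner_eq_star_dotProduct, dotProduct_comm]; congr 1
    have h2 : star (X *ᵥ w) ⬝ᵥ (X *ᵥ w) = star w ⬝ᵥ ((Xᴴ * X) *ᵥ w) := by
      rw [dot_aux X w, Matrix.mulVec_mulVec]
    have h3 : (Xᴴ * X) *ᵥ w = (hH.1.eigenvalues i) • w := hH.1.mulVec_eigenvectorBasis i
    have h4 : star w ⬝ᵥ ((hH.1.eigenvalues i) • w) = ((hH.1.eigenvalues i : ℝ) : ℂ) := by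
      rw [dotProduct_smul, hw1]
      simp [Complex.real_smul]
    have h5 : (inner ℂ b b : ℂ) = ((hH.1.eigenvalues i : ℝ) : ℂ) := by
      rw [h1, h2, h3, h4]
    have h6 := @inner_self_eq_norm_sq ℂ _ _ _ _ b
    rw [h5] at h6
    have h7 : ‖b‖ ^ 2 = RCLike.re ((hH.1.eigenvalues i : ℝ) : ℂ) := h6.symm
    simpa [RCLike.re_to_complex] using h7
  have hb : ‖b‖ = Real.sqrt (hH.1.eigenvalues i) := by
    rw [← hb2, Real.sqrt_sq (norm_nonneg b)]
  calc ‖(star w ⬝ᵥ ((M * X) *ᵥ w))‖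
      = ‖(inner ℂ a b : ℂ)‖ := by rw [hterm, hinner]
    _ ≤ ‖a‖ * ‖b‖ := norm_inner_le_norm a b
    _ ≤ 1 * ‖b‖ := by
        have := norm_nonneg b; nlinarith
    _ = Real.sqrt (hH.1.eigenvalues i) := by rw [one_mul, hb]

lemma exists_dual (X : Matrix n n ℂ) :
    ∃ M : Matrix n n ℂ, (1 - M * Mᴴ).PosSemidef ∧ ((M * X).trace).re = traceNorm X := by
  classical
  set hH := Matrix.posSemidef_conjTranspose_mul_self X with hHdef
  set U : Matrix n n ℂ := hH.1.eigenvectorUnitary.1 with hUdef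
  set e := hH.1.eigenvalues with hedef
  have he0 : ∀ i, 0 ≤ e i := fun i => hH.eigenvalues_nonneg i
  have hUU : U * star U = 1 := Matrix.mem_unitaryGroup_iff.mp hH.1.eigenvectorUnitary.2
  have hUU' : star U * U = 1 := Matrix.mem_unitaryGroup_iff'.mp hH.1.eigenvectorUnitary.2
  have spec : Xᴴ * X = U * Matrix.diagonal (fun i => ((e i : ℝ) : ℂ)) * star U :=
    hH.1.spectral_theorem
  set g : n → ℝ := fun i => if e i = 0 then 0 else (Real.sqrt (e i))⁻¹ with hgdef
  set D : Matrix n n ℂ := Matrix.diagonal (fun i => (g i : ℂ)) with hDdef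
  set E : Matrix n n ℂ := Matrix.diagonal (fun i => ((e i : ℝ) : ℂ)) with hEdef
  set M : Matrix n n ℂ := U * D * star U * Xᴴ with hMdef
  have hDH : Dᴴ = D := by
    rw [hDdef, Matrix.diagonal_conjTranspose]
    refine congrArg Matrix.diagonal (funext fun i => ?_)
    simp [Function.comp, Complex.conj_ofReal]
  have hMH : Mᴴ = X * (U * D * star U) := by
    rw [hMdef]
    simp only [Matrix.conjTranspose_mul, Matrix.conjTranspose_conjTranspose, hDH,
      Matrix.star_eq_conjTranspose]
    rw [← mul_assoc U D Uᴴ]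
  have hMX : M * X = U * (D * E) * star U := by
    rw [hMdef, mul_assoc, spec]
    calc U * D * star U * (U * E * star U)
        = U * D * (star U * U) * E * star U := by noncomm_ring
      _ = U * (D * E) * star U := by rw [hUU']; noncomm_ring
  have hMMH : M * Mᴴ = U * (D * E * D) * star U := by
    rw [hMH, hMdef, mul_assoc, ← mul_assoc Xᴴ X, spec]
    calc U * D * star U * (U * E * star U * (U * D * star U))
        = U * D * (star U * U) * E * (star U * U) * D * star U := by noncomm_ring
      _ = U * (D * E * D) * star U := by rw [hUU']; noncomm_ring
  set q : n → ℝ := fun i => if e i = 0 then 0 else 1 with hqdef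
  have hDED : D * E * D = Matrix.diagonal (fun i => ((q i : ℝ) : ℂ)) := by
    rw [hDdef, hEdef, Matrix.diagonal_mul_diagonal, Matrix.diagonal_mul_diagonal]
    refine congrArg Matrix.diagonal (funext fun i => ?_)
    rw [← Complex.ofReal_mul, ← Complex.ofReal_mul, Complex.ofReal_inj]
    by_cases hei : e i = 0
    · simp [hgdef, hqdef, hei]
    · have hsq := Real.mul_self_sqrt (he0 i)
      have hs0 : Real.sqrt (e i) ≠ 0 := fun hc => hei (by rw [← hsq, hc, mul_zero])
      simp only [hgdef, hqdef, if_neg hei]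
      field_simp
      rw [Real.sq_sqrt (he0 i)]
  refine ⟨M, ?_, ?_⟩
  · have key : 1 - M * Mᴴ = U * Matrix.diagonal (fun i => ((1 - q i : ℝ) : ℂ)) * star U := by
      rw [hMMH, hDED]
      have : Matrix.diagonal (fun i => ((1 - q i : ℝ) : ℂ))
          = 1 - Matrix.diagonal (fun i => ((q i : ℝ) : ℂ)) := by
        rw [← Matrix.diagonal_one, Matrix.diagonal_sub]
        refine congrArg Matrix.diagonal (funext fun i => ?_)
        push_cast
        ring
      rw [this, Matrix.mul_sub, Matrix.sub_mul, mul_one, hUU]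
    rw [key, Matrix.star_eq_conjTranspose]
    refine Matrix.PosSemidef.mul_mul_conjTranspose_same ?_ U
    refine Matrix.posSemidef_diagonal_iff.mpr fun i => ?_
    rw [Complex.zero_le_real]
    by_cases hei : e i = 0 <;> simp [hqdef, hei]
  · rw [hMX]
    have htr : (U * (D * E) * star U).trace = (D * E).trace := by
      rw [Matrix.trace_mul_cycle, ← mul_assoc, hUU', one_mul]
    rw [htr, hDdef, hEdef, Matrix.diagonal_mul_diagonal, Matrix.trace_diagonal,
      traceNorm_eq_sum X, Complex.re_sum]
    refine Finset.sum_congr rfl fun i _ => ?_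
    rw [← Complex.ofReal_mul, Complex.ofReal_re]
    by_cases hei : e i = 0
    · simp [hgdef, hei, ← hedef]
    · have hsq := Real.mul_self_sqrt (he0 i)
      have hs0 : Real.sqrt (e i) ≠ 0 := fun hc => hei (by rw [← hsq, hc, mul_zero])
      rw [← hedef]
      simp only [hgdef, if_neg hei]
      field_simp
      rw [Real.sq_sqrt (he0 i)]

lemma traceNorm_add_le (X Y : Matrix n n ℂ) :
    traceNorm (X + Y) ≤ traceNorm X + traceNorm Y := by
  obtain ⟨M, hM, hMt⟩ := exists_dual (X + Y)
  have h1 : (M * (X + Y)).trace = (M * X).trace + (M * Y).trace := by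
    rw [mul_add, Matrix.trace_add]
  calc traceNorm (X + Y) = ((M * X).trace).re + ((M * Y).trace).re := by
        rw [← hMt, h1, Complex.add_re]
    _ ≤ ‖(M * X).trace‖ + ‖(M * Y).trace‖ :=
        add_le_add (Complex.re_le_norm _) (Complex.re_le_norm _)
    _ ≤ traceNorm X + traceNorm Y :=
        add_le_add (abs_trace_mul_le M X hM) (abs_trace_mul_le M Y hM)

lemma sqrt_proof_irrel {A B : Matrix n n ℂ} (h : A = B) (hA : A.PosSemidef) (hB : B.PosSemidef) :
    hA.sqrt = hB.sqrt := by subst h; rfl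

lemma traceNorm_congr {X Y : Matrix n n ℂ} (h : Xᴴ * X = Yᴴ * Y) :
    traceNorm X = traceNorm Y := by
  rw [traceNorm, traceNorm,
    sqrt_proof_irrel h (Matrix.posSemidef_conjTranspose_mul_self X)
      (Matrix.posSemidef_conjTranspose_mul_self Y)]

lemma traceNorm_neg (X : Matrix n n ℂ) : traceNorm (-X) = traceNorm X :=
  traceNorm_congr (by rw [Matrix.conjTranspose_neg, neg_mul_neg])

lemma traceNorm_nonneg (X : Matrix n n ℂ) : 0 ≤ traceNorm X := by
  rw [traceNorm_eq_sum X]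
  exact Finset.sum_nonneg fun i _ => Real.sqrt_nonneg _

lemma traceNorm_smul (c : ℝ) (hc : 0 ≤ c) (X : Matrix n n ℂ) :
    traceNorm ((c : ℂ) • X) = c * traceNorm X := by
  obtain ⟨M, hM, hMt⟩ := exists_dual ((c : ℂ) • X)
  obtain ⟨N, hN, hNt⟩ := exists_dual X
  have e1 : ∀ K : Matrix n n ℂ, (K * ((c : ℂ) • X)).trace = (c : ℂ) * (K * X).trace := by
    intro K; rw [Matrix.mul_smul, Matrix.trace_smul, smul_eq_mul]
  apply le_antisymm
  · rw [← hMt, e1, Complex.re_ofReal_mul]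
    exact mul_le_mul_of_nonneg_left ((Complex.re_le_norm _).trans (abs_trace_mul_le M X hM)) hc
  · rw [← hNt, ← Complex.re_ofReal_mul, ← e1]
    exact (Complex.re_le_norm _).trans (abs_trace_mul_le N _ hN)

end TN13

/-- If `‖A‖₁ ≤ 1`, `‖B‖₁ ≤ 1` and `‖αA − (1−α)B‖₁ = 1` for some `α ∈ (0,1)`, then
`‖λA − (1−λ)B‖₁ = 1` for all `λ ∈ (0,1)`. -/
theorem stmt13 (n : ℕ) (A B : Matrix (Fin n) (Fin n) ℂ)
    (hA : traceNorm A ≤ 1) (hB : traceNorm B ≤ 1)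
    (α : ℝ) (hα : α ∈ Set.Ioo (0 : ℝ) 1)
    (h : traceNorm ((α : ℂ) • A - ((1 - α : ℝ) : ℂ) • B) = 1) :
    ∀ l ∈ Set.Ioo (0 : ℝ) 1,
      traceNorm ((l : ℂ) • A - ((1 - l : ℝ) : ℂ) • B) = 1 := by
  obtain ⟨hα0, hα1⟩ := hα
  have gle : ∀ μ : ℝ, 0 ≤ μ → μ ≤ 1 →
      traceNorm ((μ : ℂ) • A - ((1 - μ : ℝ) : ℂ) • B) ≤ 1 := by
    intro μ h0 h1
    have heq : (μ : ℂ) • A - ((1 - μ : ℝ) : ℂ) • B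
        = (μ : ℂ) • A + ((1 - μ : ℝ) : ℂ) • (-B) := by
      rw [smul_neg, sub_eq_add_neg]
    rw [heq]
    calc traceNorm ((μ : ℂ) • A + ((1 - μ : ℝ) : ℂ) • (-B))
        ≤ traceNorm ((μ : ℂ) • A) + traceNorm (((1 - μ : ℝ) : ℂ) • (-B)) :=
          TN13.traceNorm_add_le _ _
      _ = μ * traceNorm A + (1 - μ) * traceNorm B := by
          rw [TN13.traceNorm_smul μ h0, TN13.traceNorm_smul (1 - μ) (by linarith),
            TN13.traceNorm_neg]
      _ ≤ μ * 1 + (1 - μ) * 1 := by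
          have h2 := mul_le_mul_of_nonneg_left hA h0
          have h3 := mul_le_mul_of_nonneg_left hB (by linarith : (0:ℝ) ≤ 1 - μ)
          linarith
      _ = 1 := by ring
  have conv : ∀ t lam mu : ℝ, 0 ≤ t → t ≤ 1 → t * lam + (1 - t) * mu = α →
      1 ≤ t * traceNorm ((lam : ℂ) • A - ((1 - lam : ℝ) : ℂ) • B)
        + (1 - t) * traceNorm ((mu : ℂ) • A - ((1 - mu : ℝ) : ℂ) • B) := by
    intro t lam mu ht0 ht1 hsum
    have hsumC : (t : ℂ) * (lam : ℂ) + (1 - (t : ℂ)) * (mu : ℂ) = (α : ℂ) := by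
      have := congrArg (fun x : ℝ => (x : ℂ)) hsum
      push_cast at this
      linear_combination this
    have hmat : (α : ℂ) • A - ((1 - α : ℝ) : ℂ) • B
        = (t : ℂ) • ((lam : ℂ) • A - ((1 - lam : ℝ) : ℂ) • B)
          + ((1 - t : ℝ) : ℂ) • ((mu : ℂ) • A - ((1 - mu : ℝ) : ℂ) • B) := by
      match_scalars
      · push_cast
        linear_combination -hsumC
      · push_cast
        linear_combination -hsumC
    calc (1 : ℝ) = traceNorm ((α : ℂ) • A - ((1 - α : ℝ) : ℂ) • B) := h.symm
      _ = traceNorm ((t : ℂ) • ((lam : ℂ) • A - ((1 - lam : ℝ) : ℂ) • B)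
          + ((1 - t : ℝ) : ℂ) • ((mu : ℂ) • A - ((1 - mu : ℝ) : ℂ) • B)) := by rw [hmat]
      _ ≤ traceNorm ((t : ℂ) • ((lam : ℂ) • A - ((1 - lam : ℝ) : ℂ) • B))
          + traceNorm (((1 - t : ℝ) : ℂ) • ((mu : ℂ) • A - ((1 - mu : ℝ) : ℂ) • B)) :=
          TN13.traceNorm_add_le _ _
      _ = t * traceNorm ((lam : ℂ) • A - ((1 - lam : ℝ) : ℂ) • B)
          + (1 - t) * traceNorm ((mu : ℂ) • A - ((1 - mu : ℝ) : ℂ) • B) := by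
          rw [TN13.traceNorm_smul t ht0, TN13.traceNorm_smul (1 - t) (by linarith)]
  have step : ∀ x y t : ℝ, 0 < t → t < 1 → y ≤ 1 → x ≤ 1 → 1 ≤ t * x + (1 - t) * y → x = 1 := by
    intro x y t ht0 ht1 hy hx h1
    have : 1 ≤ x := by
      nlinarith [mul_le_mul_of_nonneg_left hy (by linarith : (0:ℝ) ≤ 1 - t)]
    linarith
  intro l hl
  obtain ⟨hl0, hl1⟩ := hl
  rcases lt_trichotomy l α with hlt | heq | hgt
  · set mu := (α + 1) / 2 with hmu
    have hmu0 : (0:ℝ) ≤ mu := by rw [hmu]; linarith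
    have hmu1 : mu ≤ 1 := by rw [hmu]; linarith
    have hml : l < mu := by rw [hmu]; linarith
    have hden : (0:ℝ) < mu - l := by linarith
    set t := (mu - α) / (mu - l) with htdef
    have ht0 : 0 < t := div_pos (by rw [hmu]; linarith) hden
    have ht1 : t < 1 := (div_lt_one hden).mpr (by linarith)
    have hsum : t * l + (1 - t) * mu = α := by
      rw [htdef]
      field_simp
      ring
    exact step _ _ t ht0 ht1 (gle mu hmu0 hmu1) (gle l hl0.le hl1.le)
      (conv t l mu ht0.le ht1.le hsum)
  · rw [heq]; exact h
  · set mu := α / 2 with hmu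
    have hmu0 : (0:ℝ) ≤ mu := by rw [hmu]; linarith
    have hmu1 : mu ≤ 1 := by rw [hmu]; linarith
    have hml : mu < l := by rw [hmu]; linarith
    have hden : (0:ℝ) < l - mu := by linarith
    set t := (α - mu) / (l - mu) with htdef
    have ht0 : 0 < t := div_pos (by rw [hmu]; linarith) hden
    have ht1 : t < 1 := (div_lt_one hden).mpr (by linarith)
    have hsum : t * l + (1 - t) * mu = α := by
      rw [htdef]
      field_simp
      ring
    exact step _ _ t ht0 ht1 (gle mu hmu0 hmu1) (gle l hl0.le hl1.le)
      (conv t l mu ht0.le ht1.le hsum)
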